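/- Let n > 1 and consider any graph H that contains an n-pack as an induced subgraph in which every support vertex of the pack has degree exactly 2 in H (its only neighbors are the pack's base vertex and its corresponding numeric vertex). In any Neighborhood Balanced Coloring of H, every numeric vertex of the pack receives the color opposite to the color of the base vertex; in particular, all n numeric vertices of the pack receive the same color. -/

import Mathlib

/-- A *Neighborhood Balanced Coloring* of a graph `G`: a red/blue coloring
(`true` = red, `false` = blue) such that every vertex has as many red
(open) neighbors as blue neighbors. -/
def IsNBC {V : Type*} (G : SimpleGraph V) (c : V → Bool) : Prop :=
  ∀ v : V, Nat.card {w : V // G.Adj v w ∧ c w = true}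
         = Nat.card {w : V // G.Adj v w ∧ c w = false}

/-- Vertex type of an `m`-pack: for `m ≥ 2` one base vertex (`Sum.inl`),
`2m` support vertices (`Sum.inr (Sum.inl (i, b))`) and `m` numeric vertices
(`Sum.inr (Sum.inr i)`); a `1`-pack is a single numeric vertex. -/
def PackV : ℕ → Type
  | 0 => Empty
  | 1 => Unit
  | (m + 2) => Unit ⊕ ((Fin (m + 2) × Bool) ⊕ Fin (m + 2))

/-- Base relation generating the edges of an `m`-pack: the base vertex is
adjacent to every support vertex, and the support vertex `(i, b)` is adjacent
to the numeric vertex `i` (so every numeric vertex is adjacent to exactly two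
support vertices, and every support vertex to exactly one numeric vertex).
A `1`-pack has no edges. -/
def packRel : (m : ℕ) → PackV m → PackV m → Prop
  | 0 => fun x _ => x.elim
  | 1 => fun _ _ => False
  | (_ + 2) => fun x y =>
      match x, y with
      | Sum.inl _, Sum.inr (Sum.inl _) => True
      | Sum.inr (Sum.inl (i, _)), Sum.inr (Sum.inr j) => i = j
      | _, _ => False

/-- The `m`-pack graph. -/
def Pack (m : ℕ) : SimpleGraph (PackV m) := SimpleGraph.fromRel (packRel m)

/-- The `i`-th numeric vertex of an `m`-pack. -/
def packNumeric : (m : ℕ) → Fin m → PackV m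
  | 0, i => i.elim0
  | 1, _ => ()
  | (_ + 2), i => Sum.inr (Sum.inr i)

/-- The base vertex of an `(m+2)`-pack. -/
def packBase (m : ℕ) : PackV (m + 2) := Sum.inl ()

/-- The support vertex of an `(m+2)`-pack attached to the numeric vertex `j`,
on side `b`. -/
def packSupport (m : ℕ) (j : Fin (m + 2)) (b : Bool) : PackV (m + 2) :=
  Sum.inr (Sum.inl (j, b))

/-- The predicate selecting the support vertices of an `m`-pack. -/
def isSupportV : (m : ℕ) → PackV m → Prop
  | 0 => fun _ => False
  | 1 => fun _ => False
  | (_ + 2) => fun x => match x with | Sum.inr (Sum.inl _) => True | _ => False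

/-- **Remark 1.** Let `n = m + 2 > 1` and let `H` be any finite graph containing
the `n`-pack as an induced subgraph (via the graph embedding `f`) in which
every support vertex of the pack has degree exactly `2` in `H`. Then in any
Neighborhood Balanced Coloring `c` of `H`, every numeric vertex of the pack
receives the color opposite to that of the base vertex; in particular all `n`
numeric vertices receive the same color. -/
theorem pack_numeric_opposite_base (m : ℕ) {W : Type*} [Fintype W]
    (H : SimpleGraph W) (f : Pack (m + 2) ↪g H)
    (hdeg : ∀ p : PackV (m + 2), isSupportV (m + 2) p →
      Nat.card {w : W // H.Adj (f p) w} = 2)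
    (c : W → Bool) (hc : IsNBC H c) :
    (∀ j : Fin (m + 2), c (f (packNumeric (m + 2) j)) ≠ c (f (packBase m))) ∧
    (∀ j k : Fin (m + 2), c (f (packNumeric (m + 2) j)) = c (f (packNumeric (m + 2) k))) := by
  classical
  have key : ∀ j : Fin (m + 2), c (f (packNumeric (m + 2) j)) ≠ c (f (packBase m)) := by
    intro j
    set p := packSupport m j true with hp
    set u := f (packBase m) with hu'
    set v := f (packNumeric (m + 2) j) with hv'
    have hadj1 : H.Adj (f p) u := by
      rw [hu', f.map_adj_iff]
      exact ⟨by simp only [hp, packBase, packSupport]; intro h; injection h, Or.inr trivial⟩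
    have hadj2 : H.Adj (f p) v := by
      rw [hv', f.map_adj_iff]
      simp only [Pack, packRel, hp, packNumeric, packSupport, SimpleGraph.fromRel_adj]
      refine ⟨fun h => ?_, Or.inl rfl⟩
      injection h with h2
      injection h2
    have huv : u ≠ v := by
      intro h
      have h2 := f.injective h
      simp [packBase, packNumeric] at h2
    have hS : {w : W | H.Adj (f p) w}.ncard = 2 := by
      rw [← Nat.card_coe_set_eq]
      exact hdeg p (by simp [hp, isSupportV, packSupport])
    obtain ⟨a, b, hab, hSab⟩ := Set.ncard_eq_two.mp hS
    have hu : u ∈ {w : W | H.Adj (f p) w} := hadj1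
    have hv : v ∈ {w : W | H.Adj (f p) w} := hadj2
    rw [hSab] at hu hv
    have hSet : {w : W | H.Adj (f p) w} = {u, v} := by
      rw [hSab]
      rcases hu with rfl | rfl <;> rcases hv with h | h <;>
        first
          | exact absurd h.symm huv
          | exact absurd h huv
          | subst h
          | skip
      · rfl
      · exact Set.pair_comm _ _
    intro hcol
    have h := hc (f p)
    rw [show Nat.card {w : W // H.Adj (f p) w ∧ c w = true}
          = ({w : W | H.Adj (f p) w ∧ c w = true} : Set W).ncard from Nat.card_coe_set_eq _,
        show Nat.card {w : W // H.Adj (f p) w ∧ c w = false}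
          = ({w : W | H.Adj (f p) w ∧ c w = false} : Set W).ncard from Nat.card_coe_set_eq _] at h
    have hmem : ∀ w, H.Adj (f p) w ↔ (w = u ∨ w = v) := by
      intro w
      constructor
      · intro hw
        have : w ∈ ({u, v} : Set W) := hSet ▸ hw
        simpa using this
      · rintro (rfl | rfl) <;> assumption
    cases hcu : c u with
    | true =>
      have hcv : c v = true := by rw [hcol, hcu]
      have e1 : {w : W | H.Adj (f p) w ∧ c w = true} = {u, v} := by
        ext w
        simp only [Set.mem_setOf_eq, hmem, Set.mem_insert_iff, Set.mem_singleton_iff]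
        constructor
        · exact fun hw => hw.1
        · rintro (rfl | rfl) <;> simp [hcu, hcv]
      have e2 : {w : W | H.Adj (f p) w ∧ c w = false} = (∅ : Set W) := by
        ext w
        simp only [Set.mem_setOf_eq, hmem, Set.mem_empty_iff_false, iff_false, not_and]
        rintro (rfl | rfl) <;> simp [hcu, hcv]
      rw [e1, e2, Set.ncard_empty, Set.ncard_pair huv] at h
      exact absurd h (by norm_num)
    | false =>
      have hcv : c v = false := by rw [hcol, hcu]
      have e1 : {w : W | H.Adj (f p) w ∧ c w = false} = {u, v} := by
        ext w
        simp only [Set.mem_setOf_eq, hmem, Set.mem_insert_iff, Set.mem_singleton_iff]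
        constructor
        · exact fun hw => hw.1
        · rintro (rfl | rfl) <;> simp [hcu, hcv]
      have e2 : {w : W | H.Adj (f p) w ∧ c w = true} = (∅ : Set W) := by
        ext w
        simp only [Set.mem_setOf_eq, hmem, Set.mem_empty_iff_false, iff_false, not_and]
        rintro (rfl | rfl) <;> simp [hcu, hcv]
      rw [e1, e2, Set.ncard_empty, Set.ncard_pair huv] at h
      exact absurd h (by norm_num)
  refine ⟨key, fun j k => ?_⟩
  have hj := key j
  have hk := key k
  revert hj hk
  cases c (f (packBase m)) <;> cases c (f (packNumeric (m + 2) j)) <;>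
    cases c (f (packNumeric (m + 2) k)) <;> simp
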